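/- Let n ≥ 1 and let a = (a_1,…,a_n) and b = (b_1,…,b_n) be points of D such that a_i ≤ b_i for all i = 1,…,n. Then f(a) = f(b) if and only if a = b. -/

import Mathlib

/-- Auxiliary: convex combinations of log-convex triples are log-convex. -/
lemma keymix (A B C X Y Z s : ℝ) (hA : 0 < A) (hB : 0 < B) (hC : 0 < C)
    (hX : 0 < X) (hY : 0 < Y) (hZ : 0 < Z)
    (h1 : B ^ 2 ≤ A * C) (h2 : Y ^ 2 ≤ X * Z) (hs0 : 0 ≤ s) (hs1 : s ≤ 1) :
    (B + s * (Y - B)) ^ 2 ≤ (A + s * (X - A)) * (C + s * (Z - C)) := by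
  have key : 2 * (B * Y) ≤ A * Z + X * C := by
    have hprod : B ^ 2 * Y ^ 2 ≤ (A * C) * (X * Z) :=
      mul_le_mul h1 h2 (sq_nonneg Y) (mul_nonneg hA.le hC.le)
    have hPQ : 0 < A * Z + X * C + 2 * (B * Y) := by positivity
    nlinarith [sq_nonneg (A * Z - X * C), hPQ, hprod]
  have t1 : (1 - s) ^ 2 * (B ^ 2) ≤ (1 - s) ^ 2 * (A * C) :=
    mul_le_mul_of_nonneg_left h1 (sq_nonneg _)
  have t2 : s ^ 2 * (Y ^ 2) ≤ s ^ 2 * (X * Z) :=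
    mul_le_mul_of_nonneg_left h2 (sq_nonneg _)
  have t3 : (s * (1 - s)) * (2 * (B * Y)) ≤ (s * (1 - s)) * (A * Z + X * C) :=
    mul_le_mul_of_nonneg_left key (mul_nonneg hs0 (by linarith))
  nlinarith [t1, t2, t3]

/-- For `n ≥ 1` and points `a, b` of the set
`D = {t ∈ ℝⁿ : tᵢ > 0, tⱼ² ≤ tⱼ₋₁·tⱼ₊₁ for j = 1,…,n−1, with t₀ = 1}`
(coordinates indexed `1,…,n`, with value at `0` fixed to `1`),
if `aᵢ ≤ bᵢ` for all `i = 1,…,n`, then `f(a) = f(b)` if and only if `a = b`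
(as points of `ℝⁿ`), where `f(t) = Σ_{j=1}^{n} t_{j−1}/t_j`. -/
theorem stmt1 (n : ℕ) (hn : 1 ≤ n) (a b : ℕ → ℝ)
    (ha0 : a 0 = 1) (hb0 : b 0 = 1)
    (hapos : ∀ i ∈ Finset.Icc 1 n, 0 < a i)
    (hbpos : ∀ i ∈ Finset.Icc 1 n, 0 < b i)
    (haD : ∀ j, 1 ≤ j → j ≤ n - 1 → (a j) ^ 2 ≤ a (j - 1) * a (j + 1))
    (hbD : ∀ j, 1 ≤ j → j ≤ n - 1 → (b j) ^ 2 ≤ b (j - 1) * b (j + 1))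
    (hab : ∀ i ∈ Finset.Icc 1 n, a i ≤ b i) :
    ∑ j ∈ Finset.Icc 1 n, a (j - 1) / a j = ∑ j ∈ Finset.Icc 1 n, b (j - 1) / b j ↔
      ∀ i ∈ Finset.Icc 1 n, a i = b i := by
  obtain ⟨m, rfl⟩ : ∃ m, n = m + 1 := ⟨n - 1, by omega⟩
  have hconv : ∀ u : ℕ → ℝ, ∑ j ∈ Finset.Icc 1 (m + 1), u (j - 1) / u j
      = ∑ i ∈ Finset.range (m + 1), u i / u (i + 1) := by
    intro u
    rw [show Finset.Icc 1 (m + 1) = Finset.Ico 1 (m + 2) by rw [← Finset.Ico_add_one_right_eq_Icc]; rfl,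
      Finset.sum_Ico_eq_sum_range]
    refine Finset.sum_congr (by congr 1) fun i _ => ?_
    rw [show 1 + i - 1 = i from by omega, show 1 + i = i + 1 from by omega]
  have hapos' : ∀ j, j ≤ m + 1 → 0 < a j := by
    intro j hj
    rcases Nat.eq_zero_or_pos j with h | h
    · simp [h, ha0]
    · exact hapos j (Finset.mem_Icc.2 ⟨h, hj⟩)
  have hbpos' : ∀ j, j ≤ m + 1 → 0 < b j := by
    intro j hj
    rcases Nat.eq_zero_or_pos j with h | h
    · simp [h, hb0]
    · exact hbpos j (Finset.mem_Icc.2 ⟨h, hj⟩)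
  have hab' : ∀ j, j ≤ m + 1 → a j ≤ b j := by
    intro j hj
    rcases Nat.eq_zero_or_pos j with h | h
    · simp [h, ha0, hb0]
    · exact hab j (Finset.mem_Icc.2 ⟨h, hj⟩)
  set C : ℕ → ℝ → ℝ := fun j s => a j + s * (b j - a j) with hC
  have hcpos : ∀ j, j ≤ m + 1 → ∀ s : ℝ, 0 ≤ s → 0 < C j s := by
    intro j hj s hs
    have := mul_nonneg hs (sub_nonneg.2 (hab' j hj))
    have := hapos' j hj
    simp only [hC]
    linarith
  have hcD : ∀ j, 1 ≤ j → j ≤ m → ∀ s : ℝ, 0 ≤ s → s ≤ 1 →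
      (C j s) ^ 2 ≤ C (j - 1) s * C (j + 1) s := by
    intro j h1 h2 s hs0 hs1
    have hj1 : j - 1 ≤ m + 1 := by omega
    have hj2 : j ≤ m + 1 := by omega
    have hj3 : j + 1 ≤ m + 1 := by omega
    have haDj := haD j h1 (by omega)
    have hbDj := hbD j h1 (by omega)
    simp only [hC]
    exact keymix (a (j - 1)) (a j) (a (j + 1)) (b (j - 1)) (b j) (b (j + 1)) s
      (hapos' _ hj1) (hapos' _ hj2) (hapos' _ hj3)
      (hbpos' _ hj1) (hbpos' _ hj2) (hbpos' _ hj3) haDj hbDj hs0 hs1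
  constructor
  · -- hard direction
    intro hsum
    by_contra hcon
    push_neg at hcon
    obtain ⟨i0, hi0, hne0⟩ := hcon
    set K := (Finset.Icc 1 (m + 1)).filter (fun i => a i ≠ b i) with hK
    have hKne : K.Nonempty := ⟨i0, Finset.mem_filter.2 ⟨hi0, hne0⟩⟩
    set k := K.max' hKne with hk
    have hkK : k ∈ K := K.max'_mem hKne
    rw [hK, Finset.mem_filter, Finset.mem_Icc] at hkK
    obtain ⟨⟨hk1, hk2⟩, hkne⟩ := hkK
    have hkmax : ∀ i, i ∈ Finset.Icc 1 (m + 1) → a i ≠ b i → i ≤ k :=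
      fun i h1 h2 => K.le_max' i (Finset.mem_filter.2 ⟨h1, h2⟩)
    have hek : 0 < b k - a k :=
      sub_pos.2 ((hab' k hk2).lt_of_ne hkne)
    set φ : ℝ → ℝ := fun s => ∑ i ∈ Finset.range (m + 1), C i s / C (i + 1) s with hφ
    set g : ℝ → ℝ := fun s => ∑ i ∈ Finset.range (m + 1),
      ((b i - a i) * C (i + 1) s - C i s * (b (i + 1) - a (i + 1))) / (C (i + 1) s) ^ 2 with hg
    have hderiv : ∀ s : ℝ, 0 ≤ s → HasDerivAt φ (g s) s := by
      intro s hs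
      simp only [hφ, hg, hC]
      apply HasDerivAt.fun_sum
      intro i hi
      have hi' : i + 1 ≤ m + 1 := by
        have := Finset.mem_range.1 hi; omega
      have h1 : HasDerivAt (fun s : ℝ => a i + s * (b i - a i)) (b i - a i) s := by
        simpa using ((hasDerivAt_id s).mul_const (b i - a i)).const_add (a i)
      have h2 : HasDerivAt (fun s : ℝ => a (i + 1) + s * (b (i + 1) - a (i + 1)))
          (b (i + 1) - a (i + 1)) s := by
        simpa using ((hasDerivAt_id s).mul_const (b (i + 1) - a (i + 1))).const_add (a (i + 1))
      have hne : (a (i + 1) + s * (b (i + 1) - a (i + 1))) ≠ 0 := by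
        have := hcpos (i + 1) hi' s hs
        simp only [hC] at this
        linarith
      exact h1.div h2 hne
    have hg_eq : ∀ s : ℝ, 0 ≤ s →
        g s = (∑ i ∈ Finset.range m, (b (i + 1) - a (i + 1)) *
            (1 / C (i + 2) s - C i s / (C (i + 1) s) ^ 2))
          - (b (m + 1) - a (m + 1)) * (C m s / (C (m + 1) s) ^ 2) := by
      intro s hs
      have hnz : ∀ j, j ≤ m + 1 → C j s ≠ 0 := fun j hj => ne_of_gt (hcpos j hj s hs)
      have e1 : ∀ i ∈ Finset.range (m + 1),
          ((b i - a i) * C (i + 1) s - C i s * (b (i + 1) - a (i + 1))) / (C (i + 1) s) ^ 2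
            = (b i - a i) / C (i + 1) s
              - (b (i + 1) - a (i + 1)) * (C i s / (C (i + 1) s) ^ 2) := by
        intro i hi
        have h := hnz (i + 1) (by have := Finset.mem_range.1 hi; omega)
        field_simp
      have e2 : ∀ i ∈ Finset.range m,
          (b (i + 1) - a (i + 1)) / C (i + 1 + 1) s
              - (b (i + 1) - a (i + 1)) * (C i s / (C (i + 1) s) ^ 2)
            = (b (i + 1) - a (i + 1)) * (1 / C (i + 2) s - C i s / (C (i + 1) s) ^ 2) := by
        intro i _
        rw [show i + 1 + 1 = i + 2 from rfl]
        ring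
      simp only [hg]
      rw [Finset.sum_congr rfl e1, Finset.sum_sub_distrib,
        Finset.sum_range_succ' (fun i => (b i - a i) / C (i + 1) s) m,
        Finset.sum_range_succ
          (fun i => (b (i + 1) - a (i + 1)) * (C i s / (C (i + 1) s) ^ 2)) m,
        show b 0 - a 0 = 0 by rw [ha0, hb0]; ring, zero_div, add_zero,
        sub_add_eq_sub_sub, ← Finset.sum_sub_distrib, Finset.sum_congr rfl e2]
    have hTle : ∀ s : ℝ, 0 ≤ s → s ≤ 1 → ∀ i ∈ Finset.range m,
        (b (i + 1) - a (i + 1)) * (1 / C (i + 2) s - C i s / (C (i + 1) s) ^ 2) ≤ 0 := by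
      intro s hs0 hs1 i hi
      have him := Finset.mem_range.1 hi
      have he : 0 ≤ b (i + 1) - a (i + 1) := sub_nonneg.2 (hab' (i + 1) (by omega))
      have hbr : 1 / C (i + 2) s - C i s / (C (i + 1) s) ^ 2 ≤ 0 := by
        rw [sub_nonpos, div_le_div_iff₀ (hcpos (i + 2) (by omega) s hs0)
          (pow_pos (hcpos (i + 1) (by omega) s hs0) 2), one_mul]
        have := hcD (i + 1) (by omega) (by omega) s hs0 hs1
        rw [show i + 1 - 1 = i from by omega] at this
        nlinarith [this]
      exact mul_nonpos_of_nonneg_of_nonpos he hbr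
    have hlast_nonneg : ∀ s : ℝ, 0 ≤ s →
        0 ≤ (b (m + 1) - a (m + 1)) * (C m s / (C (m + 1) s) ^ 2) := by
      intro s hs
      exact mul_nonneg (sub_nonneg.2 (hab' (m + 1) le_rfl))
        (div_nonneg (hcpos m (by omega) s hs).le (sq_nonneg _))
    have hcont : ContinuousOn φ (Set.Icc 0 1) :=
      fun s hs => (hderiv s hs.1).continuousAt.continuousWithinAt
    have hanti : AntitoneOn φ (Set.Icc 0 1) := by
      apply antitoneOn_of_deriv_nonpos (convex_Icc 0 1) hcont
      · intro x hx
        rw [interior_Icc] at hx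
        exact (hderiv x hx.1.le).differentiableAt.differentiableWithinAt
      · intro x hx
        rw [interior_Icc] at hx
        rw [(hderiv x hx.1.le).deriv, hg_eq x hx.1.le]
        have h1 := Finset.sum_nonpos (hTle x hx.1.le hx.2.le)
        have h2 := hlast_nonneg x hx.1.le
        linarith
    have hφ0 : φ 0 = ∑ j ∈ Finset.Icc 1 (m + 1), a (j - 1) / a j := by
      rw [hconv a]
      simp [hφ, hC]
    have hφ1 : φ 1 = ∑ j ∈ Finset.Icc 1 (m + 1), b (j - 1) / b j := by
      rw [hconv b]
      simp only [hφ, hC]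
      refine Finset.sum_congr rfl fun i _ => ?_
      congr 1 <;> ring
    have hφ01 : φ 1 = φ 0 := by rw [hφ0, hφ1, hsum]
    have hconst : ∀ s ∈ Set.Icc (0 : ℝ) 1, φ s = φ 0 := by
      intro s hs
      have hle : φ s ≤ φ 0 := hanti (Set.mem_Icc.2 ⟨le_rfl, zero_le_one⟩) hs hs.1
      have hge : φ 1 ≤ φ s := hanti hs (Set.mem_Icc.2 ⟨zero_le_one, le_rfl⟩) hs.2
      linarith [hφ01]
    have hgzero : ∀ s ∈ Set.Ioo (0 : ℝ) 1, g s = 0 := by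
      intro s hs
      have hEq : φ =ᶠ[nhds s] fun _ => φ 0 :=
        Filter.eventuallyEq_of_mem (isOpen_Ioo.mem_nhds hs)
          (fun x hx => hconst x (Set.Ioo_subset_Icc_self hx))
      have hd : deriv φ s = 0 := by
        rw [Filter.EventuallyEq.deriv_eq hEq]; exact deriv_const s _
      exact ((hderiv s hs.1.le).deriv).symm.trans hd
    have hzero_terms : ∀ s ∈ Set.Ioo (0 : ℝ) 1,
        (∀ i ∈ Finset.range m,
          (b (i + 1) - a (i + 1)) * (1 / C (i + 2) s - C i s / (C (i + 1) s) ^ 2) = 0)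
        ∧ (b (m + 1) - a (m + 1)) * (C m s / (C (m + 1) s) ^ 2) = 0 := by
      intro s hs
      have h0 := hgzero s hs
      rw [hg_eq s hs.1.le] at h0
      have hS := Finset.sum_nonpos (hTle s hs.1.le hs.2.le)
      have ht := hlast_nonneg s hs.1.le
      have hSz : (∑ i ∈ Finset.range m, (b (i + 1) - a (i + 1)) *
          (1 / C (i + 2) s - C i s / (C (i + 1) s) ^ 2)) = 0 := by linarith
      constructor
      · exact fun i hi => (Finset.sum_eq_zero_iff_of_nonpos (hTle s hs.1.le hs.2.le)).1 hSz i hi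
      · linarith
    rcases eq_or_lt_of_le hk2 with hkm | hkm
    · -- k = m + 1
      have h := (hzero_terms (1 / 2) (by norm_num)).2
      rw [← hkm] at h
      have hp : 0 < C m (1 / 2) := hcpos m (by omega) (1 / 2) (by norm_num)
      have hq : 0 < (C k (1 / 2)) ^ 2 :=
        pow_pos (hcpos k hk2 (1 / 2) (by norm_num)) 2
      have := mul_pos hek (div_pos hp hq)
      linarith
    · -- k ≤ m
      have hk1m : k ≤ m := by omega
      have hkk : a (k + 1) = b (k + 1) := by
        by_contra hne
        have := hkmax (k + 1) (Finset.mem_Icc.2 ⟨by omega, by omega⟩) hne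
        omega
      have hq : ∀ s ∈ Set.Ioo (0 : ℝ) 1,
          (a k + s * (b k - a k)) ^ 2 =
            (a (k - 1) + s * (b (k - 1) - a (k - 1))) *
              (a (k + 1) + s * (b (k + 1) - a (k + 1))) := by
        intro s hs
        have h := (hzero_terms s hs).1 (k - 1) (Finset.mem_range.2 (by omega))
        rw [show k - 1 + 1 = k from by omega, show k - 1 + 2 = k + 1 from by omega] at h
        have hbr : 1 / C (k + 1) s - C (k - 1) s / (C k s) ^ 2 = 0 := by
          rcases mul_eq_zero.1 h with h' | h'
          · exact absurd h' (by linarith)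
          · exact h'
        have heq := eq_of_sub_eq_zero hbr
        rw [div_eq_div_iff (ne_of_gt (hcpos (k + 1) (by omega) s hs.1.le))
          (ne_of_gt (pow_pos (hcpos k hk2 s hs.1.le) 2))] at heq
        simp only [hC] at heq
        linarith [heq]
      have h1 := hq (1 / 4) (by norm_num)
      have h2 := hq (1 / 2) (by norm_num)
      have h3 := hq (3 / 4) (by norm_num)
      have hsq : (b k - a k) ^ 2 = 0 := by
        linear_combination 8 * h1 - 16 * h2 + 8 * h3 - (b (k - 1) - a (k - 1)) * hkk
      nlinarith [hek, hsq]
  · -- easy direction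
    intro h
    refine Finset.sum_congr rfl fun j hj => ?_
    have hj' := Finset.mem_Icc.1 hj
    have h2 : a j = b j := h j hj
    have h1 : a (j - 1) = b (j - 1) := by
      rcases Nat.eq_or_lt_of_le hj'.1 with h' | h'
      · rw [show j - 1 = 0 from by omega, ha0, hb0]
      · exact h (j - 1) (Finset.mem_Icc.2 ⟨by omega, by omega⟩)
    rw [h1, h2]
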